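/- arXiv:2009.00839 — 3 statements merged into one kernel-verified Lean document; each statement's English description precedes it below -/
import Mathlib

section
/- Let A and B be N×N real symmetric matrices with eigenvalues λ₁^A ≤ λ₂^A ≤ ... ≤ λ_N^A and λ₁^B ≤ λ₂^B ≤ ... ≤ λ_N^B respectively (listed with multiplicity in increasing order). Then ∑_{j=1}^N |λ_j^A − λ_j^B|² ≤ tr((A−B)²). -/
open Finset Matrix

private lemma HW_trace_diag {n : Type*} [Fintype n] [DecidableEq n] (α β : n → ℝ)
    (M : Matrix n n ℝ) :
    Matrix.trace (Matrix.diagonal α * M * Matrix.diagonal β * Mᵀ)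
      = ∑ i, ∑ j, α i * β j * (M i j)^2 := by
  have h : ∀ i k, (Matrix.diagonal α * M * Matrix.diagonal β * Mᵀ) i k
      = ∑ j, (α i * M i j * β j) * M k j := by
    intro i k
    rw [Matrix.mul_apply]
    simp only [Matrix.mul_diagonal, Matrix.diagonal_mul, Matrix.transpose_apply]
  simp only [Matrix.trace, Matrix.diag, h]
  exact Finset.sum_congr rfl fun i _ => Finset.sum_congr rfl fun j _ => by ring

private lemma HW_star_eq_transpose {n : Type*} [Fintype n] (M : Matrix n n ℝ) :
    star M = Mᵀ := by
  ext i j; simp [Matrix.star_apply]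

private lemma HW_sq_expand {N : ℕ} (a c : Fin N → ℝ) :
    ∑ i, (a i - c i)^2 = ∑ i, (a i)^2 + ∑ i, (c i)^2 - 2 * ∑ i, a i * c i := by
  rw [Finset.mul_sum, ← Finset.sum_add_distrib, ← Finset.sum_sub_distrib]
  exact Finset.sum_congr rfl fun i _ => by ring

private lemma HW_rearr {N : ℕ} (a b : Fin N → ℝ) (ha : Monotone a) (hb : Monotone b)
    (σ : Equiv.Perm (Fin N)) :
    ∑ j, (a j - b j)^2 ≤ ∑ i, (a i - b (σ i))^2 := by
  have h1 : ∑ i, (b (σ i))^2 = ∑ i, (b i)^2 := Equiv.sum_comp σ (fun i => (b i)^2)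
  have h2 : ∑ i, a i * b (σ i) ≤ ∑ i, a i * b i :=
    (ha.monovary hb).sum_mul_comp_perm_le_sum_mul
  have e1 := HW_sq_expand a b
  have e2 := HW_sq_expand a (fun i => b (σ i))
  linarith [e1, e2]

private lemma HW_perm_sum {N : ℕ} (σ : Equiv.Perm (Fin N)) (c : Fin N → Fin N → ℝ) :
    ∑ i, ∑ j, (σ.permMatrix ℝ) i j * c i j = ∑ i, c i (σ i) := by
  simp [Equiv.Perm.permMatrix, PEquiv.toMatrix_apply, Equiv.toPEquiv_apply, ite_mul]

private lemma HW_key {N : ℕ} (S : Matrix (Fin N) (Fin N) ℝ)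
    (hS : S ∈ doublyStochastic ℝ (Fin N)) (a b : Fin N → ℝ)
    (ha : Monotone a) (hb : Monotone b) :
    ∑ j, (a j - b j)^2 ≤ ∑ i, ∑ j, S i j * (a i - b j)^2 := by
  obtain ⟨w, hw0, hw1, hwS⟩ := exists_eq_sum_perm_of_mem_doublyStochastic hS
  have hSij : ∀ i j, S i j = ∑ σ : Equiv.Perm (Fin N), w σ * (σ.permMatrix ℝ) i j := by
    intro i j
    rw [← hwS]
    simp [Matrix.sum_apply]
  calc ∑ j, (a j - b j)^2
      = ∑ σ : Equiv.Perm (Fin N), w σ * ∑ j, (a j - b j)^2 := by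
        rw [← Finset.sum_mul, hw1, one_mul]
    _ ≤ ∑ σ : Equiv.Perm (Fin N), w σ * ∑ i, (a i - b (σ i))^2 :=
        Finset.sum_le_sum fun σ _ =>
          mul_le_mul_of_nonneg_left (HW_rearr a b ha hb σ) (hw0 σ)
    _ = ∑ σ : Equiv.Perm (Fin N), w σ * ∑ i, ∑ j, (σ.permMatrix ℝ) i j * (a i - b j)^2 := by
        simp_rw [HW_perm_sum]
    _ = ∑ i, ∑ j, S i j * (a i - b j)^2 := by
        simp_rw [hSij, Finset.sum_mul, Finset.mul_sum]
        rw [Finset.sum_comm]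
        refine Finset.sum_congr rfl fun i _ => ?_
        rw [Finset.sum_comm]
        exact Finset.sum_congr rfl fun j _ => Finset.sum_congr rfl fun σ _ => by ring

private lemma HW_traceAB {n : Type*} [Fintype n] [DecidableEq n]
    (A B : Matrix n n ℝ) (hA : A.IsHermitian) (hB : B.IsHermitian) :
    Matrix.trace (A * B) = ∑ i, ∑ j, hA.eigenvalues i * hB.eigenvalues j *
      (((star (hA.eigenvectorUnitary : Matrix n n ℝ) * (hB.eigenvectorUnitary : Matrix n n ℝ))) i j)^2 := by
  set P := (hA.eigenvectorUnitary : Matrix n n ℝ) with hP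
  set Q := (hB.eigenvectorUnitary : Matrix n n ℝ) with hQ
  set W := star P * Q with hW
  have hdiagA : Matrix.diagonal ((RCLike.ofReal : ℝ → ℝ) ∘ hA.eigenvalues) = Matrix.diagonal hA.eigenvalues := by
    congr 1
  have hdiagB : Matrix.diagonal ((RCLike.ofReal : ℝ → ℝ) ∘ hB.eigenvalues) = Matrix.diagonal hB.eigenvalues := by
    congr 1
  conv_lhs => rw [hA.spectral_theorem, hB.spectral_theorem]
  rw [hdiagA, hdiagB]
  simp only [Unitary.conjStarAlgAut_apply]
  have hassoc : P * Matrix.diagonal hA.eigenvalues * star P * (Q * Matrix.diagonal hB.eigenvalues * star Q)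
      = P * (Matrix.diagonal hA.eigenvalues * W * Matrix.diagonal hB.eigenvalues * star Q) := by
    rw [hW]
    simp only [Matrix.mul_assoc]
  rw [hassoc, Matrix.trace_mul_comm, Matrix.mul_assoc]
  have hQP : star Q * P = Wᵀ := by
    rw [← HW_star_eq_transpose, hW, Matrix.star_mul, star_star]
  rw [hQP, HW_trace_diag]

/-- Hoffman–Wielandt inequality for real symmetric matrices. -/
theorem hoffman_wielandt {N : ℕ} (A B : Matrix (Fin N) (Fin N) ℝ)
    (hA : A.IsHermitian) (hB : B.IsHermitian)
    (lA lB : Fin N → ℝ) (hmA : Monotone lA) (hmB : Monotone lB)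
    (σA σB : Equiv.Perm (Fin N))
    (hlA : lA = hA.eigenvalues ∘ σA) (hlB : lB = hB.eigenvalues ∘ σB) :
    ∑ j, |lA j - lB j| ^ 2 ≤ Matrix.trace ((A - B) * (A - B)) := by
  set P := (hA.eigenvectorUnitary : Matrix (Fin N) (Fin N) ℝ) with hPdef
  set Q := (hB.eigenvectorUnitary : Matrix (Fin N) (Fin N) ℝ) with hQdef
  set α := hA.eigenvalues with hα
  set β := hB.eigenvalues with hβ
  set W := star P * Q with hWdef
  -- unitarity
  have hPu : star P * P = 1 := (Unitary.mem_iff.mp hA.eigenvectorUnitary.2).1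
  have hPu' : P * star P = 1 := (Unitary.mem_iff.mp hA.eigenvectorUnitary.2).2
  have hQu : star Q * Q = 1 := (Unitary.mem_iff.mp hB.eigenvectorUnitary.2).1
  have hQu' : Q * star Q = 1 := (Unitary.mem_iff.mp hB.eigenvectorUnitary.2).2
  have hWW : W * Wᵀ = 1 := by
    rw [← HW_star_eq_transpose, hWdef, Matrix.star_mul, star_star, Matrix.mul_assoc,
      ← Matrix.mul_assoc Q, hQu', Matrix.one_mul, hPu]
  have hWtW : Wᵀ * W = 1 := by
    rw [← HW_star_eq_transpose, hWdef, Matrix.star_mul, star_star, Matrix.mul_assoc,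
      ← Matrix.mul_assoc P, hPu', Matrix.one_mul, hQu]
  -- the doubly stochastic matrix
  set S : Matrix (Fin N) (Fin N) ℝ := Matrix.of (fun i j => (W i j)^2) with hSdef
  have hrow : ∀ i, ∑ j, S i j = 1 := by
    intro i
    have := congrFun (congrFun hWW i) i
    rw [Matrix.mul_apply] at this
    simp only [Matrix.one_apply_eq] at this
    rw [← this]
    exact Finset.sum_congr rfl fun j _ => by
      simp [hSdef, Matrix.transpose_apply, sq]
  have hcol : ∀ j, ∑ i, S i j = 1 := by
    intro j
    have := congrFun (congrFun hWtW j) j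
    rw [Matrix.mul_apply] at this
    simp only [Matrix.one_apply_eq] at this
    rw [← this]
    exact Finset.sum_congr rfl fun i _ => by
      simp [hSdef, Matrix.transpose_apply, sq]
  -- the permuted matrix
  set S' : Matrix (Fin N) (Fin N) ℝ := Matrix.of (fun i j => S (σA i) (σB j)) with hS'def
  have hS' : S' ∈ doublyStochastic ℝ (Fin N) := by
    rw [mem_doublyStochastic_iff_sum]
    refine ⟨fun i j => by simp [hS'def, hSdef, sq_nonneg], fun i => ?_, fun j => ?_⟩
    · rw [show ∑ j, S' i j = ∑ j, S (σA i) (σB j) from rfl]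
      rw [Equiv.sum_comp σB (fun j => S (σA i) j)]
      exact hrow (σA i)
    · rw [show ∑ i, S' i j = ∑ i, S (σA i) (σB j) from rfl]
      rw [Equiv.sum_comp σA (fun i => S i (σB j))]
      exact hcol (σB j)
  -- key inequality
  have hkey := HW_key S' hS' lA lB hmA hmB
  have habs : ∑ j, |lA j - lB j| ^ 2 = ∑ j, (lA j - lB j)^2 :=
    Finset.sum_congr rfl fun j _ => sq_abs _
  -- rewrite RHS of key as unpermuted double sum
  have hre : ∑ i, ∑ j, S' i j * (lA i - lB j)^2 = ∑ i, ∑ j, S i j * (α i - β j)^2 := by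
    rw [← Equiv.sum_comp σA (fun i => ∑ j, S i j * (α i - β j)^2)]
    refine Finset.sum_congr rfl fun i _ => ?_
    rw [← Equiv.sum_comp σB (fun j => S (σA i) j * (α (σA i) - β j)^2)]
    refine Finset.sum_congr rfl fun j _ => ?_
    simp [hS'def, hlA, hlB]
  -- traces
  have htrAB : Matrix.trace (A * B) = ∑ i, ∑ j, α i * β j * S i j := by
    rw [HW_traceAB A B hA hB]
    exact Finset.sum_congr rfl fun i _ => Finset.sum_congr rfl fun j _ => rfl
  have htrAA : Matrix.trace (A * A) = ∑ i, (α i)^2 := by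
    rw [HW_traceAB A A hA hA, show star (hA.eigenvectorUnitary : Matrix (Fin N) (Fin N) ℝ) *
      (hA.eigenvectorUnitary : Matrix (Fin N) (Fin N) ℝ) = 1 from hPu]
    simp only [Matrix.one_apply]
    rw [Finset.sum_congr rfl (fun i _ => Finset.sum_eq_single i
      (fun j _ hj => by simp [Ne.symm hj]) (fun h => absurd (Finset.mem_univ i) h))]
    exact Finset.sum_congr rfl fun i _ => by simp [sq, hα]
  have htrBB : Matrix.trace (B * B) = ∑ i, (β i)^2 := by
    rw [HW_traceAB B B hB hB, show star (hB.eigenvectorUnitary : Matrix (Fin N) (Fin N) ℝ) *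
      (hB.eigenvectorUnitary : Matrix (Fin N) (Fin N) ℝ) = 1 from hQu]
    simp only [Matrix.one_apply]
    rw [Finset.sum_congr rfl (fun i _ => Finset.sum_eq_single i
      (fun j _ hj => by simp [Ne.symm hj]) (fun h => absurd (Finset.mem_univ i) h))]
    exact Finset.sum_congr rfl fun i _ => by simp [sq, hβ]
  have hexpand : Matrix.trace ((A - B) * (A - B))
      = Matrix.trace (A * A) + Matrix.trace (B * B) - 2 * Matrix.trace (A * B) := by
    have : (A - B) * (A - B) = A * A - A * B - B * A + B * B := by noncomm_ring
    rw [this, Matrix.trace_add, Matrix.trace_sub, Matrix.trace_sub,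
      Matrix.trace_mul_comm B A]
    ring
  -- expand the double sum
  have hsum : ∑ i, ∑ j, S i j * (α i - β j)^2
      = ∑ i, (α i)^2 + ∑ j, (β j)^2 - 2 * ∑ i, ∑ j, α i * β j * S i j := by
    have e1 : ∀ i, ∑ j, S i j * (α i - β j)^2
        = (α i)^2 * (∑ j, S i j) + (∑ j, S i j * (β j)^2) - 2 * ∑ j, α i * β j * S i j := by
      intro i
      rw [Finset.mul_sum, Finset.mul_sum, ← Finset.sum_add_distrib, ← Finset.sum_sub_distrib]
      exact Finset.sum_congr rfl fun j _ => by ring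
    simp only [e1, hrow, mul_one]
    rw [Finset.sum_sub_distrib, Finset.sum_add_distrib, ← Finset.mul_sum]
    have e2 : ∑ x, ∑ j, S x j * (β j)^2 = ∑ j, (β j)^2 := by
      rw [Finset.sum_comm]
      exact Finset.sum_congr rfl fun j _ => by rw [← Finset.sum_mul, hcol, one_mul]
    rw [e2]
  calc ∑ j, |lA j - lB j| ^ 2 = ∑ j, (lA j - lB j)^2 := habs
    _ ≤ ∑ i, ∑ j, S' i j * (lA i - lB j)^2 := hkey
    _ = ∑ i, ∑ j, S i j * (α i - β j)^2 := hre
    _ = Matrix.trace ((A - B) * (A - B)) := by rw [hsum, hexpand, htrAA, htrBB, htrAB]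
end

section
/- Let (ω_n)_{n ∈ ℤ^d} be i.i.d. random variables whose common distribution μ has density (δ/2)|x|^{-(1+δ)} for |x| > 1 and 0 for |x| < 1, with δ > 0. Fix α with 0 < αδ < d, set Γ_L = (2L+1)^{(d−αδ)/δ}, and let Ẽ_L^max(ω) = max_{n ∈ Λ_L} ω_n/(1+|n|)^α. Then for every x > 0, P(Ẽ_L^max/Γ_L ≤ x) → exp(−b/(2x^δ)) as L → ∞, and for every x ≤ 0 the limit is 0, where b = lim_{L→∞} Γ_L^{-δ} ∑_{n ∈ Λ_L} (1+|n|)^{-αδ}. -/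
open MeasureTheory ProbabilityTheory Filter
open scoped ENNReal

/-- The cube Λ_L = {n ∈ ℤ^d : |n_i| ≤ L for all i}. -/
noncomputable def cube (d L : ℕ) : Finset (Fin d → ℤ) :=
  Finset.Icc (fun _ => -(L : ℤ)) (fun _ => (L : ℤ))

noncomputable def nud (δ : ℝ) : Measure ℝ :=
  volume.withDensity
    (fun t => ENNReal.ofReal (if 1 < |t| then δ / 2 * |t| ^ (-(1 + δ)) else 0))

lemma nud_Ioi {δ : ℝ} (hδ : 0 < δ) {t : ℝ} (ht : 1 ≤ t) :
    nud δ (Set.Ioi t) = ENNReal.ofReal (t ^ (-δ) / 2) := by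
  have ht0 : (0:ℝ) < t := lt_of_lt_of_le one_pos ht
  rw [nud, withDensity_apply _ measurableSet_Ioi]
  have hcong : ∀ s ∈ Set.Ioi t,
      ENNReal.ofReal (if 1 < |s| then δ / 2 * |s| ^ (-(1 + δ)) else 0)
        = ENNReal.ofReal (δ / 2 * s ^ (-(1 + δ))) := by
    intro s hs
    have h1s : (1:ℝ) < s := lt_of_le_of_lt ht hs
    rw [abs_of_pos (by linarith), if_pos h1s]
  rw [setLIntegral_congr_fun measurableSet_Ioi hcong]
  have hint : IntegrableOn (fun s : ℝ => δ / 2 * s ^ (-(1 + δ))) (Set.Ioi t) :=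
    (integrableOn_Ioi_rpow_of_lt (by linarith) ht0).const_mul _
  have hnn : 0 ≤ᵐ[volume.restrict (Set.Ioi t)] fun s : ℝ => δ / 2 * s ^ (-(1 + δ)) := by
    refine (ae_restrict_iff' measurableSet_Ioi).2 (Filter.Eventually.of_forall fun s hs => ?_)
    have : (0:ℝ) < s := lt_trans ht0 hs
    positivity
  rw [← MeasureTheory.ofReal_integral_eq_lintegral_ofReal hint hnn,
    MeasureTheory.integral_const_mul, integral_Ioi_rpow_of_lt (by linarith) ht0]
  congr 1
  have : -(1 + δ) + 1 = -δ := by ring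
  rw [this]
  field_simp

lemma nud_Iic_of_one_le {δ : ℝ} (hδ : 0 < δ) (h1 : nud δ Set.univ = 1) {t : ℝ} (ht : 1 ≤ t) :
    nud δ (Set.Iic t) = ENNReal.ofReal (1 - t ^ (-δ) / 2) := by
  have ht0 : (0:ℝ) < t := lt_of_lt_of_le one_pos ht
  have hIoi := nud_Ioi hδ ht
  have hcompl : Set.Iic t = (Set.Ioi t)ᶜ := by simp
  rw [hcompl, measure_compl measurableSet_Ioi (by simp [hIoi]), h1, hIoi,
    ← ENNReal.ofReal_one, ← ENNReal.ofReal_sub _ (by positivity)]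

lemma nud_Iic_le_half {δ : ℝ} (hδ : 0 < δ) (h1 : nud δ Set.univ = 1) {t : ℝ} (ht : t ≤ 0) :
    nud δ (Set.Iic t) ≤ ENNReal.ofReal (1 / 2) := by
  have hIoi := nud_Ioi hδ (le_refl 1)
  rw [Real.one_rpow] at hIoi
  have hdisj : Disjoint (Set.Iic t) (Set.Ioi 1) := by
    refine Set.disjoint_left.2 fun s hs hs' => ?_
    simp only [Set.mem_Iic, Set.mem_Ioi] at hs hs'
    linarith
  have hun : nud δ (Set.Iic t) + nud δ (Set.Ioi 1) ≤ 1 := by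
    rw [← measure_union hdisj measurableSet_Ioi, ← h1]
    exact measure_mono (Set.subset_univ _)
  rw [hIoi] at hun
  have h2 : (1 : ℝ≥0∞) - ENNReal.ofReal (1 / 2) = ENNReal.ofReal (1 / 2) := by
    rw [← ENNReal.ofReal_one, ← ENNReal.ofReal_sub _ (by norm_num)]
    norm_num
  calc nud δ (Set.Iic t) ≤ 1 - ENNReal.ofReal (1 / 2) :=
        ENNReal.le_sub_of_add_le_right (by simp) hun
    _ = ENNReal.ofReal (1 / 2) := h2

lemma cube_card (d L : ℕ) : (cube d L).card = (2 * L + 1) ^ d := by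
  rw [cube, Pi.card_Icc]
  simp only [Int.card_Icc]
  rw [Finset.prod_const, Finset.card_univ, Fintype.card_fin]
  congr 1
  omega

lemma log_one_sub_bounds {q ε : ℝ} (hq : 0 < q) (hqε : q ≤ ε) (hε : ε ≤ 1/2) :
    -(q / (1 - ε)) ≤ Real.log (1 - q) ∧ Real.log (1 - q) ≤ -q := by
  have h1q : 0 < 1 - q := by linarith
  have h1ε : 0 < 1 - ε := by linarith
  constructor
  · have hlog : Real.log (1 - q)⁻¹ ≤ (1 - q)⁻¹ - 1 := Real.log_le_sub_one_of_pos (inv_pos.2 h1q)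
    rw [Real.log_inv] at hlog
    have heq1 : (1 - q)⁻¹ - 1 = q / (1 - q) := by field_simp; ring
    have hmono : q / (1 - q) ≤ q / (1 - ε) := by
      rw [div_le_div_iff₀ h1q h1ε]
      nlinarith
    linarith
  · have := Real.log_le_sub_one_of_pos h1q
    linarith

/-- Fréchet-type limit for the largest eigenvalue of the diagonal potential:
P(Ẽ_L^max/Γ_L ≤ x) → exp(-b/(2x^δ)) for x > 0, and → 0 for x ≤ 0. -/
theorem max_potential_eigenvalue_asymptotics {Ω : Type*} [MeasurableSpace Ω]
    (P : Measure Ω) [IsProbabilityMeasure P]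
    (d : ℕ) (hd : 1 ≤ d) (α δ b : ℝ) (hα : 0 < α) (hδ : 0 < δ)
    (h1 : 0 < α * δ) (h2 : α * δ < d)
    (X : (Fin d → ℤ) → Ω → ℝ) (hmeas : ∀ n, Measurable (X n))
    (hindep : iIndepFun X P)
    (hdist : ∀ n, Measure.map (X n) P =
      volume.withDensity
        (fun t => ENNReal.ofReal (if 1 < |t| then δ / 2 * |t| ^ (-(1 + δ)) else 0)))
    (hb : Tendsto
      (fun L : ℕ =>
        ((2 * (L : ℝ) + 1) ^ (((d : ℝ) - α * δ) / δ)) ^ (-δ) *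
          ∑ n ∈ cube d L, (1 + ‖n‖) ^ (-(α * δ)))
      atTop (nhds b))
    (hne : ∀ L : ℕ, (cube d L).Nonempty)
    (x : ℝ) :
    Tendsto
      (fun L : ℕ =>
        (P {ω | ((cube d L).sup' (hne L) fun n => X n ω / (1 + ‖n‖) ^ α) /
            (2 * (L : ℝ) + 1) ^ (((d : ℝ) - α * δ) / δ) ≤ x}).toReal)
      atTop (nhds (if 0 < x then Real.exp (-(b / (2 * x ^ δ))) else 0)) := by
  classical
  have hmap : ∀ n, Measure.map (X n) P = nud δ := hdist
  have hν1 : nud δ Set.univ = 1 := by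
    have hpm : IsProbabilityMeasure (Measure.map (X 0) P) :=
      Measure.isProbabilityMeasure_map (hmeas 0).aemeasurable
    rw [← hmap 0]; exact hpm.measure_univ
  set e : ℝ := ((d : ℝ) - α * δ) / δ with he
  have hepos : 0 < e := div_pos (by linarith) hδ
  have hΓpos : ∀ L : ℕ, (0:ℝ) < (2 * (L:ℝ) + 1) ^ e :=
    fun L => Real.rpow_pos_of_pos (by positivity) _
  have hw1 : ∀ n : Fin d → ℤ, (1:ℝ) ≤ (1 + ‖n‖) ^ α :=
    fun n => Real.one_le_rpow (by linarith [norm_nonneg n]) hα.le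
  have hwpos : ∀ n : Fin d → ℤ, (0:ℝ) < (1 + ‖n‖) ^ α :=
    fun n => lt_of_lt_of_le one_pos (hw1 n)
  have hPset : ∀ L : ℕ,
      P {ω | ((cube d L).sup' (hne L) fun n => X n ω / (1 + ‖n‖) ^ α) /
            (2 * (L:ℝ) + 1) ^ e ≤ x}
        = ∏ n ∈ cube d L, nud δ (Set.Iic (x * (2 * (L:ℝ) + 1) ^ e * (1 + ‖n‖) ^ α)) := by
    intro L
    have hseteq : {ω | ((cube d L).sup' (hne L) fun n => X n ω / (1 + ‖n‖) ^ α) /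
            (2 * (L:ℝ) + 1) ^ e ≤ x}
        = ⋂ n ∈ cube d L, X n ⁻¹' Set.Iic (x * (2 * (L:ℝ) + 1) ^ e * (1 + ‖n‖) ^ α) := by
      ext ω
      simp only [Set.mem_setOf_eq, Set.mem_iInter, Set.mem_preimage, Set.mem_Iic]
      rw [div_le_iff₀ (hΓpos L), Finset.sup'_le_iff]
      exact forall₂_congr fun n _ => by rw [div_le_iff₀ (hwpos n)]
    rw [hseteq, hindep.meas_biInter (fun n _ => ⟨Set.Iic _, measurableSet_Iic, rfl⟩)]
    exact Finset.prod_congr rfl fun n _ => by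
      rw [← Measure.map_apply (hmeas n) measurableSet_Iic, hmap n]
  simp only [hPset]
  by_cases hx : 0 < x
  · rw [if_pos hx]
    set c : ℝ := b / (2 * x ^ δ) with hc
    have hΓtop : Tendsto (fun L : ℕ => (2 * (L:ℝ) + 1) ^ e) atTop atTop :=
      (tendsto_rpow_atTop hepos).comp
        (tendsto_atTop_mono (fun L : ℕ => by have h0 : (0:ℝ) ≤ (L:ℝ) := Nat.cast_nonneg L; linarith)
          tendsto_natCast_atTop_atTop)
    have hxΓtop : Tendsto (fun L : ℕ => x * (2 * (L:ℝ) + 1) ^ e) atTop atTop :=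
      hΓtop.const_mul_atTop hx
    have hev1 : ∀ᶠ L : ℕ in atTop, 1 ≤ x * (2 * (L:ℝ) + 1) ^ e := hxΓtop.eventually_ge_atTop 1
    have hεto : Tendsto (fun L : ℕ => (x * (2 * (L:ℝ) + 1) ^ e) ^ (-δ) / 2) atTop (nhds 0) := by
      have h := (tendsto_rpow_neg_atTop hδ).comp hxΓtop
      simpa using h.div_const 2
    have hTto : Tendsto
        (fun L : ℕ => ∑ n ∈ cube d L, (x * (2 * (L:ℝ) + 1) ^ e * (1 + ‖n‖) ^ α) ^ (-δ) / 2)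
        atTop (nhds c) := by
      have hTeq : ∀ L : ℕ,
          (∑ n ∈ cube d L, (x * (2 * (L:ℝ) + 1) ^ e * (1 + ‖n‖) ^ α) ^ (-δ) / 2)
            = x ^ (-δ) / 2 *
              (((2 * (L:ℝ) + 1) ^ e) ^ (-δ) * ∑ n ∈ cube d L, (1 + ‖n‖) ^ (-(α * δ))) := by
        intro L
        rw [Finset.mul_sum, Finset.mul_sum]
        refine Finset.sum_congr rfl fun n _ => ?_
        have h1n : (0:ℝ) ≤ 1 + ‖n‖ := by positivity
        have hwn : (((1 + ‖n‖) ^ α : ℝ)) ^ (-δ) = (1 + ‖n‖) ^ (-(α * δ)) := by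
          rw [← Real.rpow_mul h1n]
          congr 1
          ring
        rw [Real.mul_rpow (mul_nonneg hx.le (hΓpos L).le) (hwpos n).le,
            Real.mul_rpow hx.le (hΓpos L).le, hwn]
        ring
      have hcc : x ^ (-δ) / 2 * b = c := by
        have hxδ : x ^ δ ≠ 0 := ne_of_gt (Real.rpow_pos_of_pos hx δ)
        rw [hc, Real.rpow_neg hx.le]
        field_simp
      have h := hb.const_mul (x ^ (-δ) / 2)
      rw [hcc] at h
      exact h.congr fun L => (hTeq L).symm
    have hkey : ∀ᶠ L in atTop, ∀ n ∈ cube d L,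
        1 ≤ x * (2 * (L:ℝ) + 1) ^ e * (1 + ‖n‖) ^ α ∧
        0 < (x * (2 * (L:ℝ) + 1) ^ e * (1 + ‖n‖) ^ α) ^ (-δ) / 2 ∧
        (x * (2 * (L:ℝ) + 1) ^ e * (1 + ‖n‖) ^ α) ^ (-δ) / 2
          ≤ (x * (2 * (L:ℝ) + 1) ^ e) ^ (-δ) / 2 ∧
        (x * (2 * (L:ℝ) + 1) ^ e) ^ (-δ) / 2 ≤ 1 / 2 := by
      filter_upwards [hev1] with L h1
      intro n _
      have hxΓpos : (0:ℝ) < x * (2 * (L:ℝ) + 1) ^ e := lt_of_lt_of_le one_pos h1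
      have hcn : 1 ≤ x * (2 * (L:ℝ) + 1) ^ e * (1 + ‖n‖) ^ α :=
        le_trans h1 (le_mul_of_one_le_right hxΓpos.le (hw1 n))
      refine ⟨hcn, ?_, ?_, ?_⟩
      · have := Real.rpow_pos_of_pos (lt_of_lt_of_le one_pos hcn) (-δ)
        linarith
      · have := Real.rpow_le_rpow_of_nonpos hxΓpos
          (le_mul_of_one_le_right hxΓpos.le (hw1 n)) (by linarith : -δ ≤ 0)
        linarith
      · have := Real.rpow_le_one_of_one_le_of_nonpos h1 (by linarith : -δ ≤ 0)
        linarith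
    have hgev : ∀ᶠ L in atTop,
        (-(∑ n ∈ cube d L, (x * (2 * (L:ℝ) + 1) ^ e * (1 + ‖n‖) ^ α) ^ (-δ) / 2)
            / (1 - (x * (2 * (L:ℝ) + 1) ^ e) ^ (-δ) / 2)
          ≤ ∑ n ∈ cube d L,
              Real.log (1 - (x * (2 * (L:ℝ) + 1) ^ e * (1 + ‖n‖) ^ α) ^ (-δ) / 2)) ∧
        (∑ n ∈ cube d L,
              Real.log (1 - (x * (2 * (L:ℝ) + 1) ^ e * (1 + ‖n‖) ^ α) ^ (-δ) / 2)
          ≤ -(∑ n ∈ cube d L, (x * (2 * (L:ℝ) + 1) ^ e * (1 + ‖n‖) ^ α) ^ (-δ) / 2)) := by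
      filter_upwards [hkey] with L hk
      constructor
      · rw [neg_div, Finset.sum_div, ← Finset.sum_neg_distrib]
        refine Finset.sum_le_sum fun n hn => ?_
        obtain ⟨hcn, hqpos, hqle, hεh⟩ := hk n hn
        exact (log_one_sub_bounds hqpos hqle hεh).1
      · rw [← Finset.sum_neg_distrib]
        refine Finset.sum_le_sum fun n hn => ?_
        obtain ⟨hcn, hqpos, hqle, hεh⟩ := hk n hn
        exact (log_one_sub_bounds hqpos hqle hεh).2
    have hlowto : Tendsto
        (fun L : ℕ =>
          -(∑ n ∈ cube d L, (x * (2 * (L:ℝ) + 1) ^ e * (1 + ‖n‖) ^ α) ^ (-δ) / 2)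
            / (1 - (x * (2 * (L:ℝ) + 1) ^ e) ^ (-δ) / 2))
        atTop (nhds (-c)) := by
      have hden : Tendsto (fun L : ℕ => 1 - (x * (2 * (L:ℝ) + 1) ^ e) ^ (-δ) / 2)
          atTop (nhds 1) := by
        simpa using hεto.const_sub 1
      have h := (hTto.neg).div hden one_ne_zero
      rw [div_one] at h
      exact h
    have hgto : Tendsto
        (fun L : ℕ => ∑ n ∈ cube d L,
            Real.log (1 - (x * (2 * (L:ℝ) + 1) ^ e * (1 + ‖n‖) ^ α) ^ (-δ) / 2))
        atTop (nhds (-c)) :=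
      tendsto_of_tendsto_of_tendsto_of_le_of_le' hlowto hTto.neg
        (hgev.mono fun L h => h.1) (hgev.mono fun L h => h.2)
    have hfinal : Tendsto
        (fun L : ℕ => Real.exp (∑ n ∈ cube d L,
            Real.log (1 - (x * (2 * (L:ℝ) + 1) ^ e * (1 + ‖n‖) ^ α) ^ (-δ) / 2)))
        atTop (nhds (Real.exp (-c))) :=
      (Real.continuous_exp.continuousAt.tendsto).comp hgto
    refine Tendsto.congr' ?_ hfinal
    filter_upwards [hkey] with L hk
    rw [Real.exp_sum, ENNReal.toReal_prod]
    refine Finset.prod_congr rfl fun n hn => ?_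
    obtain ⟨hcn, hqpos, hqle, hεh⟩ := hk n hn
    have h1q : (0:ℝ) < 1 - (x * (2 * (L:ℝ) + 1) ^ e * (1 + ‖n‖) ^ α) ^ (-δ) / 2 := by
      linarith
    rw [Real.exp_log h1q, nud_Iic_of_one_le hδ hν1 hcn, ENNReal.toReal_ofReal (by linarith)]
  · rw [if_neg hx]
    push_neg at hx
    have hub : ∀ L : ℕ,
        (∏ n ∈ cube d L, nud δ (Set.Iic (x * (2 * (L:ℝ) + 1) ^ e * (1 + ‖n‖) ^ α))).toReal
          ≤ (1/2 : ℝ) ^ (L + 1) := by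
      intro L
      rw [ENNReal.toReal_prod]
      have hstep : ∀ n ∈ cube d L,
          (nud δ (Set.Iic (x * (2 * (L:ℝ) + 1) ^ e * (1 + ‖n‖) ^ α))).toReal ≤ 1/2 := by
        intro n _
        have hneg : x * (2 * (L:ℝ) + 1) ^ e * (1 + ‖n‖) ^ α ≤ 0 :=
          mul_nonpos_iff.2 (Or.inr ⟨mul_nonpos_iff.2 (Or.inr ⟨hx, (hΓpos L).le⟩), (hwpos n).le⟩)
        exact ENNReal.toReal_le_of_le_ofReal (by norm_num) (nud_Iic_le_half hδ hν1 hneg)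
      calc (∏ n ∈ cube d L,
            (nud δ (Set.Iic (x * (2 * (L:ℝ) + 1) ^ e * (1 + ‖n‖) ^ α))).toReal)
          ≤ ∏ _n ∈ cube d L, (1/2 : ℝ) :=
            Finset.prod_le_prod (fun n _ => ENNReal.toReal_nonneg) hstep
        _ = (1/2 : ℝ) ^ (cube d L).card := by rw [Finset.prod_const]
        _ ≤ (1/2 : ℝ) ^ (L + 1) := by
            refine pow_le_pow_of_le_one (by norm_num) (by norm_num) ?_
            rw [cube_card]
            have h3 : 2 * L + 1 ≤ (2 * L + 1) ^ d := by
              calc 2 * L + 1 = (2 * L + 1) ^ 1 := (pow_one _).symm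
                _ ≤ (2 * L + 1) ^ d := Nat.pow_le_pow_right (by omega) hd
            omega
    refine squeeze_zero (fun L => ENNReal.toReal_nonneg) hub ?_
    have h0 : Tendsto (fun n : ℕ => (1/2 : ℝ) ^ n) atTop (nhds 0) :=
      tendsto_pow_atTop_nhds_zero_of_lt_one (by norm_num) (by norm_num)
    exact h0.comp (tendsto_add_atTop_nat 1)
end

section
/- Under the same hypotheses (i.i.d. ω_n with density (δ/2)|x|^{-(1+δ)} for |x|>1, 0 < αδ < d, Γ_L = (2L+1)^{(d−αδ)/δ}, b as before), let Ẽ_L^min(ω) = min_{n ∈ Λ_L} ω_n/(1+|n|)^α. Then lim_{L→∞} P(Ẽ_L^min/Γ_L ≤ x) = 1 for x ≥ 0, and = 1 − exp(−b/(2|x|^δ)) for x < 0. -/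
open MeasureTheory ProbabilityTheory Filter

open Set in
lemma density_Iic (δ : ℝ) (hδ : 0 < δ) {c : ℝ} (hc : c ≤ -1) :
    (volume.withDensity fun t =>
      ENNReal.ofReal (if 1 < |t| then δ / 2 * |t| ^ (-(1 + δ)) else 0)) (Set.Iic c)
    = ENNReal.ofReal ((-c) ^ (-δ) / 2) := by
  rw [withDensity_apply _ measurableSet_Iic]
  set g : ℝ → ℝ := fun t => δ / 2 * (-t) ^ (-(1 + δ)) with hg
  have hae : (fun t => ENNReal.ofReal (if 1 < |t| then δ / 2 * |t| ^ (-(1 + δ)) else 0))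
      =ᶠ[ae (volume.restrict (Set.Iic c))] fun t => ENNReal.ofReal (g t) := by
    have h1 : ∀ᵐ t : ℝ ∂volume, t ≠ (-1 : ℝ) := by
      refine (ae_iff.mpr ?_)
      simp [Real.volume_singleton, Set.setOf_eq_eq_singleton']
    filter_upwards [ae_restrict_of_ae h1, ae_restrict_mem measurableSet_Iic] with t ht htc
    have htlt : t < -1 := lt_of_le_of_ne (le_trans htc hc) ht
    rw [if_pos (by rw [abs_of_neg (by linarith)]; linarith), abs_of_neg (by linarith)]
  rw [lintegral_congr_ae hae]
  have hig0 : IntegrableOn (fun x : ℝ => δ / 2 * x ^ (-(1 + δ))) (Set.Ioi (-c)) :=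
    (integrableOn_Ioi_rpow_of_lt (by linarith) (by linarith)).const_mul _
  have hig : IntegrableOn g (Set.Iic c) := by
    have hmap : Measure.map (fun x : ℝ => -x) volume = volume := Measure.map_neg_eq_self volume
    have := (integrableOn_map_equiv (Homeomorph.neg ℝ).toMeasurableEquiv
      (f := fun x : ℝ => δ / 2 * x ^ (-(1 + δ))) (s := Set.Ioi (-c)) (μ := volume)).mp
    rw [show ⇑(Homeomorph.neg ℝ).toMeasurableEquiv = fun x : ℝ => -x from rfl, hmap] at this
    have h2 := this hig0
    have hpre : (fun x : ℝ => -x) ⁻¹' Set.Ioi (-c) = Set.Iio c := by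
      ext t; simp [neg_lt, lt_neg]
    rw [hpre] at h2
    exact Iff.mpr integrableOn_Iic_iff_integrableOn_Iio h2
  rw [← ofReal_integral_eq_lintegral_ofReal hig ?_]
  · congr 1
    have : ∫ t in Set.Iic c, g t = ∫ x in Set.Ioi (-c), δ / 2 * x ^ (-(1 + δ)) := by
      rw [← integral_comp_neg_Iic]
    rw [this, MeasureTheory.integral_const_mul, integral_Ioi_rpow_of_lt (by linarith) (by linarith),
      show -(1 + δ) + 1 = -δ by ring]
    field_simp
  · filter_upwards [ae_restrict_mem measurableSet_Iic] with t ht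
    have : (0:ℝ) < -t := by simp only [Set.mem_Iic] at ht; linarith
    exact mul_nonneg (by positivity) (Real.rpow_nonneg this.le _)

lemma density_Ioi (δ : ℝ) (hδ : 0 < δ) :
    (volume.withDensity fun t =>
      ENNReal.ofReal (if 1 < |t| then δ / 2 * |t| ^ (-(1 + δ)) else 0)) (Set.Ioi 0)
    = ENNReal.ofReal (1 / 2) := by
  rw [withDensity_apply _ measurableSet_Ioi,
    show Set.Ioi (0:ℝ) = Set.Ioc 0 1 ∪ Set.Ioi 1 from (Set.Ioc_union_Ioi_eq_Ioi zero_le_one).symm,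
    lintegral_union measurableSet_Ioi (Set.Ioc_disjoint_Ioi le_rfl)]
  have h1 : ∫⁻ t in Set.Ioc (0:ℝ) 1,
      ENNReal.ofReal (if 1 < |t| then δ / 2 * |t| ^ (-(1 + δ)) else 0) = 0 := by
    rw [setLIntegral_congr_fun measurableSet_Ioc (fun t ht => ?_), lintegral_zero]
    · rw [if_neg (by rw [abs_of_pos ht.1]; exact not_lt.mpr ht.2), ENNReal.ofReal_zero]
  have h2 : ∫⁻ t in Set.Ioi (1:ℝ),
      ENNReal.ofReal (if 1 < |t| then δ / 2 * |t| ^ (-(1 + δ)) else 0)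
      = ENNReal.ofReal (1 / 2) := by
    have hcong : (fun t => ENNReal.ofReal (if 1 < |t| then δ / 2 * |t| ^ (-(1 + δ)) else 0))
        =ᶠ[ae (volume.restrict (Set.Ioi (1:ℝ)))]
        fun t => ENNReal.ofReal (δ / 2 * t ^ (-(1 + δ))) := by
      filter_upwards [ae_restrict_mem measurableSet_Ioi] with t ht
      rw [if_pos (by rw [abs_of_pos (by linarith [Set.mem_Ioi.mp ht])]; exact ht),
        abs_of_pos (by linarith [Set.mem_Ioi.mp ht])]
    rw [lintegral_congr_ae hcong,
      ← ofReal_integral_eq_lintegral_ofReal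
        ((integrableOn_Ioi_rpow_of_lt (by linarith) zero_lt_one).const_mul _) ?_]
    · rw [MeasureTheory.integral_const_mul, integral_Ioi_rpow_of_lt (by linarith) zero_lt_one,
        show -(1 + δ) + 1 = -δ by ring, Real.one_rpow]
      congr 1
      field_simp
    · filter_upwards [ae_restrict_mem measurableSet_Ioi] with t ht
      have : (0:ℝ) < t := lt_trans zero_lt_one ht
      exact mul_nonneg (by positivity) (Real.rpow_nonneg this.le _)
  rw [h1, h2, zero_add]


lemma tendsto_prod_one_sub {ι : Type*} (s : ℕ → Finset ι) (a : ℕ → ι → ℝ) (M : ℕ → ℝ) (S : ℝ)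
    (h0 : ∀ L i, i ∈ s L → 0 ≤ a L i) (hM : ∀ L i, i ∈ s L → a L i ≤ M L)
    (hM0 : Tendsto M atTop (nhds 0))
    (hS : Tendsto (fun L => ∑ i ∈ s L, a L i) atTop (nhds S)) :
    Tendsto (fun L => ∏ i ∈ s L, (1 - a L i)) atTop (nhds (Real.exp (-S))) := by
  have hev : ∀ᶠ L in atTop, M L ≤ 1 / 2 := by
    have : Set.Iio (1/2 : ℝ) ∈ nhds (0:ℝ) := Iio_mem_nhds (by norm_num)
    filter_upwards [hM0.eventually this] with L hL using le_of_lt hL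
  -- per-term bounds
  have hterm : ∀ L, M L ≤ 1 / 2 → ∀ i ∈ s L,
      (-1 - 2 * M L) * a L i ≤ Real.log (1 - a L i) ∧ Real.log (1 - a L i) ≤ -a L i := by
    intro L hML i hi
    have ha0 := h0 L i hi
    have haM := hM L i hi
    have h1a : (0:ℝ) < 1 - a L i := by linarith
    constructor
    · have hlog : -Real.log (1 - a L i) ≤ (1 - a L i)⁻¹ - 1 := by
        have := Real.log_le_sub_one_of_pos (inv_pos.mpr h1a)
        rwa [Real.log_inv] at this
      have hinv : (1 - a L i)⁻¹ ≤ 1 + a L i + 2 * (M L * a L i) := by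
        rw [inv_eq_one_div, div_le_iff₀ h1a]
        have h1 : a L i * a L i ≤ M L * a L i := mul_le_mul_of_nonneg_right haM ha0
        have h2 : M L * a L i * a L i ≤ M L * a L i * (1/2) :=
          mul_le_mul_of_nonneg_left (le_trans haM hML) (by nlinarith)
        nlinarith
      nlinarith
    · have := Real.log_le_sub_one_of_pos h1a
      linarith
  have key : Tendsto (fun L => ∑ i ∈ s L, Real.log (1 - a L i)) atTop (nhds (-S)) := by
    have hg : Tendsto (fun L => (-1 - 2 * M L) * ∑ i ∈ s L, a L i) atTop (nhds (-S)) := by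
      have := ((tendsto_const_nhds (x := (-1:ℝ)) (f := atTop)).sub (hM0.const_mul 2)).mul hS
      simpa using this
    refine tendsto_of_tendsto_of_tendsto_of_le_of_le' hg hS.neg ?_ ?_
    · filter_upwards [hev] with L hML
      rw [Finset.mul_sum]
      exact Finset.sum_le_sum fun i hi => (hterm L hML i hi).1
    · filter_upwards [hev] with L hML
      rw [← Finset.sum_neg_distrib]
      exact Finset.sum_le_sum fun i hi => (hterm L hML i hi).2
  have hexp := (Real.continuous_exp.tendsto _).comp key
  refine hexp.congr' ?_
  filter_upwards [hev] with L hML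
  simp only [Function.comp_apply]
  rw [Real.exp_sum]
  refine Finset.prod_congr rfl fun i hi => ?_
  have ha0 := h0 L i hi
  have haM := hM L i hi
  exact Real.exp_log (by linarith)


/-- Weibull-type limit for the smallest eigenvalue of the diagonal potential:
P(Ẽ_L^min/Γ_L ≤ x) → 1 for x ≥ 0, and → 1 - exp(-b/(2|x|^δ)) for x < 0. -/
theorem min_potential_eigenvalue_asymptotics {Ω : Type*} [MeasurableSpace Ω]
    (P : Measure Ω) [IsProbabilityMeasure P]
    (d : ℕ) (hd : 1 ≤ d) (α δ b : ℝ) (hα : 0 < α) (hδ : 0 < δ)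
    (h1 : 0 < α * δ) (h2 : α * δ < d)
    (X : (Fin d → ℤ) → Ω → ℝ) (hmeas : ∀ n, Measurable (X n))
    (hindep : iIndepFun X P)
    (hdist : ∀ n, Measure.map (X n) P =
      volume.withDensity
        (fun t => ENNReal.ofReal (if 1 < |t| then δ / 2 * |t| ^ (-(1 + δ)) else 0)))
    (hb : Tendsto
      (fun L : ℕ =>
        ((2 * (L : ℝ) + 1) ^ (((d : ℝ) - α * δ) / δ)) ^ (-δ) *
          ∑ n ∈ cube d L, (1 + ‖n‖) ^ (-(α * δ)))
      atTop (nhds b))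
    (hne : ∀ L : ℕ, (cube d L).Nonempty)
    (x : ℝ) :
    Tendsto
      (fun L : ℕ =>
        (P {ω | ((cube d L).inf' (hne L) fun n => X n ω / (1 + ‖n‖) ^ α) /
            (2 * (L : ℝ) + 1) ^ (((d : ℝ) - α * δ) / δ) ≤ x}).toReal)
      atTop
      (nhds (if 0 ≤ x then 1 else 1 - Real.exp (-(b / (2 * |x| ^ δ))))) := by
  have hΓpos : ∀ L : ℕ, (0:ℝ) < (2 * (L : ℝ) + 1) ^ (((d : ℝ) - α * δ) / δ) :=
    fun L => Real.rpow_pos_of_pos (by positivity) _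
  have hwpos : ∀ n : Fin d → ℤ, (0:ℝ) < (1 + ‖n‖) ^ α :=
    fun n => Real.rpow_pos_of_pos (by positivity) _
  have hwone : ∀ n : Fin d → ℤ, (1:ℝ) ≤ (1 + ‖n‖) ^ α := by
    intro n
    calc (1:ℝ) = 1 ^ α := (Real.one_rpow α).symm
      _ ≤ (1 + ‖n‖) ^ α :=
        Real.rpow_le_rpow (by norm_num) (by linarith [norm_nonneg n]) hα.le
  -- decomposition of the probability of the event
  have hPto : ∀ L : ℕ,
      (P {ω | ((cube d L).inf' (hne L) fun n => X n ω / (1 + ‖n‖) ^ α) /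
          (2 * (L : ℝ) + 1) ^ (((d : ℝ) - α * δ) / δ) ≤ x}).toReal
        = 1 - ∏ n ∈ cube d L,
            (1 - (P (X n ⁻¹' Set.Iic (x * (2 * (L : ℝ) + 1) ^ (((d : ℝ) - α * δ) / δ) *
              (1 + ‖n‖) ^ α))).toReal) := by
    intro L
    have hset : {ω | ((cube d L).inf' (hne L) fun n => X n ω / (1 + ‖n‖) ^ α) /
          (2 * (L : ℝ) + 1) ^ (((d : ℝ) - α * δ) / δ) ≤ x}
        = (⋂ n ∈ cube d L, X n ⁻¹' Set.Ioi (x * (2 * (L : ℝ) + 1) ^ (((d : ℝ) - α * δ) / δ) *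
            (1 + ‖n‖) ^ α))ᶜ := by
      ext ω
      simp only [Set.mem_setOf_eq, Set.mem_compl_iff, Set.mem_iInter, Set.mem_preimage,
        Set.mem_Ioi]
      rw [div_le_iff₀ (hΓpos L), Finset.inf'_le_iff]
      push_neg
      constructor
      · rintro ⟨n, hn, h⟩
        exact ⟨n, hn, (div_le_iff₀ (hwpos n)).mp h⟩
      · rintro ⟨n, hn, h⟩
        exact ⟨n, hn, (div_le_iff₀ (hwpos n)).mpr h⟩
    have hmeasI : MeasurableSet (⋂ n ∈ cube d L,
        X n ⁻¹' Set.Ioi (x * (2 * (L : ℝ) + 1) ^ (((d : ℝ) - α * δ) / δ) * (1 + ‖n‖) ^ α)) :=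
      MeasurableSet.biInter (Set.to_countable _) fun n _ => (hmeas n) measurableSet_Ioi
    rw [hset, prob_compl_eq_one_sub hmeasI,
      ENNReal.toReal_sub_of_le prob_le_one ENNReal.one_ne_top, ENNReal.toReal_one,
      hindep.meas_biInter (fun n _ =>
        ⟨Set.Ioi (x * (2 * (L : ℝ) + 1) ^ (((d : ℝ) - α * δ) / δ) * (1 + ‖n‖) ^ α),
          measurableSet_Ioi, rfl⟩),
      ENNReal.toReal_prod]
    congr 1
    refine Finset.prod_congr rfl fun n _ => ?_
    have hpre : X n ⁻¹' Set.Ioi (x * (2 * (L : ℝ) + 1) ^ (((d : ℝ) - α * δ) / δ) *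
        (1 + ‖n‖) ^ α) = (X n ⁻¹' Set.Iic (x * (2 * (L : ℝ) + 1) ^ (((d : ℝ) - α * δ) / δ) *
        (1 + ‖n‖) ^ α))ᶜ := by
      rw [← Set.preimage_compl, Set.compl_Iic]
    rw [hpre, prob_compl_eq_one_sub ((hmeas n) measurableSet_Iic),
      ENNReal.toReal_sub_of_le prob_le_one ENNReal.one_ne_top, ENNReal.toReal_one]
  -- CDF formula
  have hcdf : ∀ (n : Fin d → ℤ) (c : ℝ), c ≤ -1 →
      (P (X n ⁻¹' Set.Iic c)).toReal = (-c) ^ (-δ) / 2 := by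
    intro n c hc
    rw [← Measure.map_apply (hmeas n) measurableSet_Iic, hdist n, density_Iic δ hδ hc,
      ENNReal.toReal_ofReal (div_nonneg (Real.rpow_nonneg (by linarith) _) (by norm_num))]
  have hΓtop : Tendsto (fun L : ℕ => (2 * (L:ℝ) + 1) ^ (((d:ℝ) - α * δ) / δ)) atTop atTop := by
    apply (tendsto_rpow_atTop (div_pos (by linarith) hδ)).comp
    apply tendsto_atTop_add_const_right
    exact (tendsto_natCast_atTop_atTop (R := ℝ)).const_mul_atTop (by norm_num)
  rcases le_or_gt 0 x with hx | hx
  · -- nonnegative case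
    rw [if_pos hx]
    have hhalf : ∀ n, (P (X n ⁻¹' Set.Iic (0:ℝ))).toReal = 1/2 := by
      intro n
      have hpre : X n ⁻¹' Set.Iic (0:ℝ) = (X n ⁻¹' Set.Ioi 0)ᶜ := by
        rw [← Set.preimage_compl, Set.compl_Ioi]
      rw [hpre, prob_compl_eq_one_sub ((hmeas n) measurableSet_Ioi),
        ENNReal.toReal_sub_of_le prob_le_one ENNReal.one_ne_top, ENNReal.toReal_one,
        ← Measure.map_apply (hmeas n) measurableSet_Ioi, hdist n, density_Ioi δ hδ,
        ENNReal.toReal_ofReal (by norm_num)]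
      norm_num
    have hcard : ∀ L : ℕ, L + 1 ≤ (cube d L).card := by
      intro L
      have hc : (cube d L).card = (2 * L + 1) ^ d := by
        rw [cube, Pi.card_Icc]
        simp only [Int.card_Icc]
        rw [Finset.prod_const, Finset.card_univ, Fintype.card_fin]
        congr 1
        omega
      rw [hc]
      calc L + 1 ≤ 2 * L + 1 := by omega
        _ ≤ (2 * L + 1) ^ d := Nat.le_self_pow (by omega) _
    have hub : ∀ L : ℕ,
        (P {ω | ((cube d L).inf' (hne L) fun n => X n ω / (1 + ‖n‖) ^ α) /
            (2 * (L : ℝ) + 1) ^ (((d : ℝ) - α * δ) / δ) ≤ x}).toReal ≤ 1 := by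
      intro L
      simpa using ENNReal.toReal_mono ENNReal.one_ne_top (prob_le_one (μ := P))
    have hlb : ∀ L : ℕ, 1 - (1/2 : ℝ) ^ (L + 1) ≤
        (P {ω | ((cube d L).inf' (hne L) fun n => X n ω / (1 + ‖n‖) ^ α) /
            (2 * (L : ℝ) + 1) ^ (((d : ℝ) - α * δ) / δ) ≤ x}).toReal := by
      intro L
      rw [hPto L]
      have hfac : ∀ n ∈ cube d L,
          (1 - (P (X n ⁻¹' Set.Iic (x * (2 * (L : ℝ) + 1) ^ (((d : ℝ) - α * δ) / δ) *
            (1 + ‖n‖) ^ α))).toReal) ≤ 1/2 := by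
        intro n _
        have hc0 : (0:ℝ) ≤ x * (2 * (L : ℝ) + 1) ^ (((d : ℝ) - α * δ) / δ) * (1 + ‖n‖) ^ α :=
          mul_nonneg (mul_nonneg hx (hΓpos L).le) (hwpos n).le
        have hmono : (P (X n ⁻¹' Set.Iic (0:ℝ))).toReal ≤
            (P (X n ⁻¹' Set.Iic (x * (2 * (L : ℝ) + 1) ^ (((d : ℝ) - α * δ) / δ) *
              (1 + ‖n‖) ^ α))).toReal :=
          ENNReal.toReal_mono (measure_ne_top P _)
            (measure_mono (Set.preimage_mono (Set.Iic_subset_Iic.mpr hc0)))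
        rw [hhalf n] at hmono
        linarith
      have hfac0 : ∀ n ∈ cube d L,
          (0:ℝ) ≤ 1 - (P (X n ⁻¹' Set.Iic (x * (2 * (L : ℝ) + 1) ^ (((d : ℝ) - α * δ) / δ) *
            (1 + ‖n‖) ^ α))).toReal := by
        intro n _
        have : (P (X n ⁻¹' Set.Iic (x * (2 * (L : ℝ) + 1) ^ (((d : ℝ) - α * δ) / δ) *
            (1 + ‖n‖) ^ α))).toReal ≤ 1 := by
          simpa using ENNReal.toReal_mono ENNReal.one_ne_top (prob_le_one (μ := P))
        linarith
      have hprodle : ∏ n ∈ cube d L,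
          (1 - (P (X n ⁻¹' Set.Iic (x * (2 * (L : ℝ) + 1) ^ (((d : ℝ) - α * δ) / δ) *
            (1 + ‖n‖) ^ α))).toReal) ≤ (1/2 : ℝ) ^ (L + 1) := by
        calc ∏ n ∈ cube d L, (1 - (P (X n ⁻¹' Set.Iic (x * (2 * (L : ℝ) + 1) ^
              (((d : ℝ) - α * δ) / δ) * (1 + ‖n‖) ^ α))).toReal)
            ≤ ∏ _n ∈ cube d L, (1/2 : ℝ) := Finset.prod_le_prod hfac0 hfac
          _ = (1/2 : ℝ) ^ (cube d L).card := Finset.prod_const _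
          _ ≤ (1/2 : ℝ) ^ (L + 1) :=
              pow_le_pow_of_le_one (by norm_num) (by norm_num) (hcard L)
      linarith
    refine tendsto_of_tendsto_of_tendsto_of_le_of_le' ?_ tendsto_const_nhds
      (Filter.Eventually.of_forall hlb) (Filter.Eventually.of_forall hub)
    have hp : Tendsto (fun L : ℕ => (1/2:ℝ)^(L+1)) atTop (nhds 0) :=
      (tendsto_pow_atTop_nhds_zero_of_lt_one (by norm_num) (by norm_num)).comp
        (tendsto_add_atTop_nat 1)
    simpa using (tendsto_const_nhds (x := (1:ℝ)) (f := atTop)).sub hp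
  · -- negative case
    rw [if_neg (not_le.mpr hx)]
    have hxpos : 0 < |x| := abs_pos.mpr hx.ne
    set K : ℝ := |x| ^ (-δ) / 2 with hK
    have hK0 : 0 ≤ K := div_nonneg (Real.rpow_nonneg (abs_nonneg x) _) (by norm_num)
    have hMS : Tendsto (fun L : ℕ =>
        K * ((2 * (L:ℝ) + 1) ^ (((d:ℝ) - α * δ) / δ)) ^ (-δ)) atTop (nhds 0) := by
      have h := ((tendsto_rpow_neg_atTop hδ).comp hΓtop).const_mul K
      simpa using h
    have hsum : Tendsto (fun L : ℕ => ∑ n ∈ cube d L,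
        K * ((2 * (L:ℝ) + 1) ^ (((d:ℝ) - α * δ) / δ)) ^ (-δ) * (1 + ‖n‖) ^ (-(α * δ)))
        atTop (nhds (K * b)) := by
      refine (hb.const_mul K).congr fun L => ?_
      rw [← mul_assoc, Finset.mul_sum]
    have hprod : Tendsto (fun L : ℕ => ∏ n ∈ cube d L,
        (1 - K * ((2 * (L:ℝ) + 1) ^ (((d:ℝ) - α * δ) / δ)) ^ (-δ) * (1 + ‖n‖) ^ (-(α * δ))))
        atTop (nhds (Real.exp (-(K * b)))) := by
      refine tendsto_prod_one_sub (fun L => cube d L)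
        (fun L n => K * ((2 * (L:ℝ) + 1) ^ (((d:ℝ) - α * δ) / δ)) ^ (-δ) *
          (1 + ‖n‖) ^ (-(α * δ)))
        (fun L => K * ((2 * (L:ℝ) + 1) ^ (((d:ℝ) - α * δ) / δ)) ^ (-δ)) (K * b)
        (fun L n _ => by positivity) (fun L n _ => ?_) hMS hsum
      have hw1 : ((1:ℝ) + ‖n‖) ^ (-(α * δ)) ≤ 1 :=
        Real.rpow_le_one_of_one_le_of_nonpos (by linarith [norm_nonneg n])
          (neg_nonpos.mpr h1.le)
      exact mul_le_of_le_one_right (by positivity) hw1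
    have hKb : -(K * b) = -(b / (2 * |x| ^ δ)) := by
      have hpow : (0:ℝ) < |x| ^ δ := Real.rpow_pos_of_pos hxpos δ
      rw [hK, Real.rpow_neg (abs_nonneg x), div_mul_eq_mul_div, inv_mul_eq_div, div_div,
        mul_comm (|x| ^ δ) 2]
    rw [hKb] at hprod
    have hfinal := (tendsto_const_nhds (x := (1:ℝ)) (f := atTop)).sub hprod
    refine hfinal.congr' ?_
    filter_upwards [hΓtop.eventually_ge_atTop (|x|⁻¹)] with L hL
    rw [hPto L]
    congr 1
    refine Finset.prod_congr rfl fun n _ => ?_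
    have hxΓ : x * (2 * (L:ℝ) + 1) ^ (((d:ℝ) - α * δ) / δ) ≤ -1 := by
      have h3 := mul_le_mul_of_nonneg_left hL (abs_nonneg x)
      rw [mul_inv_cancel₀ hxpos.ne'] at h3
      rw [abs_of_neg hx, neg_mul] at h3
      linarith
    have hc : x * (2 * (L:ℝ) + 1) ^ (((d:ℝ) - α * δ) / δ) * (1 + ‖n‖) ^ α ≤ -1 := by
      calc x * (2 * (L:ℝ) + 1) ^ (((d:ℝ) - α * δ) / δ) * (1 + ‖n‖) ^ α
          ≤ x * (2 * (L:ℝ) + 1) ^ (((d:ℝ) - α * δ) / δ) * 1 :=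
            mul_le_mul_of_nonpos_left (hwone n) (by linarith)
        _ = x * (2 * (L:ℝ) + 1) ^ (((d:ℝ) - α * δ) / δ) := mul_one _
        _ ≤ -1 := hxΓ
    congr 1
    rw [hcdf n _ hc]
    have hneg : -(x * (2 * (L:ℝ) + 1) ^ (((d:ℝ) - α * δ) / δ) * (1 + ‖n‖) ^ α)
        = |x| * (2 * (L:ℝ) + 1) ^ (((d:ℝ) - α * δ) / δ) * (1 + ‖n‖) ^ α := by
      rw [abs_of_neg hx]; ring
    have hw2 : (((1:ℝ) + ‖n‖) ^ α) ^ (-δ) = ((1:ℝ) + ‖n‖) ^ (-(α * δ)) := by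
      rw [← Real.rpow_mul (by positivity), show α * (-δ) = -(α * δ) by ring]
    rw [hneg, Real.mul_rpow (by positivity) (hwpos n).le,
      Real.mul_rpow (abs_nonneg x) (hΓpos L).le, hw2, hK]
    ring
end
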